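/- Let λ, μ be partitions of length at most n with μ ⊆ λ and suppose μ_t ≥ λ_{t+1} for some 1 ≤ t ≤ n-1. Let M = (a_{i,j})_{i,j=1}^n be a matrix over a commutative ring such that a_{i,j} = 0 whenever λ_i - μ_j - i + j < 0, and additionally λ satisfies λ_b ≤ λ_a + 1 for all a < b (λ is a 'dented partition'). Then a_{i,j} = 0 for all t+1 ≤ i ≤ n and 1 ≤ j ≤ t, and consequently det M = det(a_{i,j})_{i,j=1}^t · det(a_{i,j})_{i,j=t+1}^n. -/
import Mathlib


/-- Determinant factorization in Lemma `rec1-dual`: let `λ` be a dented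
partition (`λ_b ≤ λ_a + 1` for `a < b`), `μ ⊆ λ` a partition, and suppose
`μ_t ≥ λ_{t+1}` for some `1 ≤ t ≤ n-1` (1-indexed).  If `a i j = 0` whenever
`λ_i - μ_j - i + j < 0`, then `a i j = 0` on the lower-left block
(`t+1 ≤ i ≤ n`, `1 ≤ j ≤ t`), and consequently
`det a = det (a)_{1..t} · det (a)_{t+1..n}`. -/
theorem dented_det_block_factorization {R : Type*} [CommRing R] (n t : ℕ)
    (ht1 : 1 ≤ t) (ht2 : t < n)
    (lam mu : Fin n → ℕ)
    (hdent : ∀ a b : Fin n, a < b → lam b ≤ lam a + 1)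
    (hmu : ∀ i j : Fin n, i ≤ j → mu j ≤ mu i)
    (hsub : ∀ i : Fin n, mu i ≤ lam i)
    (hT : lam ⟨t, ht2⟩ ≤ mu ⟨t - 1, by omega⟩)
    (a : Matrix (Fin n) (Fin n) R)
    (ha : ∀ i j : Fin n,
      (lam i : ℤ) - (mu j : ℤ) - ((i : ℕ) : ℤ) + ((j : ℕ) : ℤ) < 0 → a i j = 0) :
    (∀ i j : Fin n, t ≤ (i : ℕ) → (j : ℕ) < t → a i j = 0) ∧
    a.det =
      (Matrix.of fun i j : Fin t =>
          a ⟨i, by have := i.isLt; omega⟩ ⟨j, by have := j.isLt; omega⟩).det *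
      (Matrix.of fun i j : Fin (n - t) =>
          a ⟨t + i, by have := i.isLt; omega⟩ ⟨t + j, by have := j.isLt; omega⟩).det := by
  have hll : ∀ i j : Fin n, t ≤ (i : ℕ) → (j : ℕ) < t → a i j = 0 := by
    intro i j hi hj
    apply ha
    have h1 : mu ⟨t - 1, by omega⟩ ≤ mu j :=
      hmu j ⟨t - 1, by omega⟩ (by simp only [Fin.le_def]; omega)
    have h2 : lam ⟨t, ht2⟩ ≤ mu j := le_trans hT h1
    rcases eq_or_lt_of_le hi with h | h
    · have h4 : lam i = lam ⟨t, ht2⟩ := by congr 1; exact Fin.ext h.symm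
      omega
    · have h3 : lam i ≤ lam ⟨t, ht2⟩ + 1 :=
        hdent ⟨t, ht2⟩ i (by simp only [Fin.lt_def]; omega)
      omega
  refine ⟨hll, ?_⟩
  let e : Fin t ⊕ Fin (n - t) ≃ Fin n := finSumFinEquiv.trans (finCongr (by omega))
  rw [← Matrix.det_submatrix_equiv_self e a]
  have heq : a.submatrix e e = Matrix.fromBlocks
      (Matrix.of fun i j : Fin t =>
          a ⟨i, by have := i.isLt; omega⟩ ⟨j, by have := j.isLt; omega⟩)
      (Matrix.of fun (i : Fin t) (j : Fin (n - t)) =>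
          a ⟨i, by have := i.isLt; omega⟩ ⟨t + j, by have := j.isLt; omega⟩)
      0
      (Matrix.of fun i j : Fin (n - t) =>
          a ⟨t + i, by have := i.isLt; omega⟩ ⟨t + j, by have := j.isLt; omega⟩) := by
    have he1 : ∀ i : Fin t, (e (Sum.inl i)) = (⟨i, by have := i.isLt; omega⟩ : Fin n) := by
      intro i; ext; simp [e, finSumFinEquiv]
    have he2 : ∀ j : Fin (n - t),
        (e (Sum.inr j)) = (⟨t + j, by have := j.isLt; omega⟩ : Fin n) := by
      intro j; ext; simp [e, finSumFinEquiv]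
    ext i j
    rcases i with i | i <;> rcases j with j | j <;>
      simp only [Matrix.submatrix_apply, Matrix.fromBlocks_apply₁₁,
        Matrix.fromBlocks_apply₁₂, Matrix.fromBlocks_apply₂₁,
        Matrix.fromBlocks_apply₂₂, Matrix.of_apply, he1, he2, Matrix.zero_apply]
    exact hll _ _ (by simp) (by simpa using j.isLt)
  rw [heq, Matrix.det_fromBlocks_zero₂₁]
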